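/- Let P be a monic-up-to-sign real polynomial of exact degree n with n simple real zeros, |P(y)| ≥ 1 for all critical points y, A := {x ∈ ℝ : −1 ≤ P(x) ≤ 1}, 0 ∉ A, and |P(0)| > 1. Then with L_n(A) := min{‖Q‖_A : deg Q ≤ n, Q(0)=1} = 1/|P(0)| and κ := (|P(0)| + sqrt(P(0)² − 1))^{−1/n}, one has exactly L_n(A) = 2κⁿ/(1+κ²ⁿ). -/

import Mathlib

open Polynomial Filter

lemma exists_root_between (f : Polynomial ℝ) {a b : ℝ} (hab : a < b)
    (h : f.eval a * f.eval b < 0) : ∃ z ∈ Set.Ioo a b, f.eval z = 0 := by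
  have hc : ContinuousOn (fun t => f.eval t) (Set.Icc a b) := f.continuous.continuousOn
  rcases mul_neg_iff.mp h with ⟨h1, h2⟩ | ⟨h1, h2⟩
  · obtain ⟨z, hz, hz0⟩ := intermediate_value_Ioo' hab.le hc (Set.mem_Ioo.mpr ⟨h2, h1⟩)
    exact ⟨z, hz, hz0⟩
  · obtain ⟨z, hz, hz0⟩ := intermediate_value_Ioo hab.le hc (Set.mem_Ioo.mpr ⟨h1, h2⟩)
    exact ⟨z, hz, hz0⟩

lemma card_distinct_roots_le (S : Polynomial ℝ) (hS : S ≠ 0) (T : Finset ℝ)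
    (hT : ∀ a ∈ T, S.eval a = 0) : T.card ≤ S.natDegree := by
  have h1 : T ⊆ S.roots.toFinset := fun a ha =>
    Multiset.mem_toFinset.mpr ((mem_roots hS).mpr (hT a ha))
  calc T.card ≤ S.roots.toFinset.card := Finset.card_le_card h1
    _ ≤ Multiset.card S.roots := Multiset.toFinset_card_le _
    _ ≤ S.natDegree := S.card_roots'

lemma X_sq_dvd (S : Polynomial ℝ) (h0 : S.eval 0 = 0) (h1 : S.derivative.eval 0 = 0) :
    X ^ 2 ∣ S := by
  obtain ⟨S₁, rfl⟩ : X ∣ S := by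
    have := (dvd_iff_isRoot (p := S) (a := 0)).mpr h0
    simpa using this
  have h2 : S₁.eval 0 = 0 := by
    have hd := derivative_mul (f := (X : Polynomial ℝ)) (g := S₁)
    rw [hd] at h1
    simpa using h1
  obtain ⟨S₂, rfl⟩ : X ∣ S₁ := by
    have := (dvd_iff_isRoot (p := S₁) (a := 0)).mpr h2
    simpa using this
  exact ⟨S₂, by ring⟩

lemma card_distinct_roots_add_two_le (S : Polynomial ℝ) (hS : S ≠ 0) (T : Finset ℝ)
    (hT : ∀ a ∈ T, S.eval a = 0) (h0 : (0 : ℝ) ∉ T) (hdvd : X ^ 2 ∣ S) :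
    T.card + 2 ≤ S.natDegree := by
  classical
  have hM : (T.val + ({0, 0} : Multiset ℝ)) ≤ S.roots := by
    rw [Multiset.le_iff_count]
    intro a
    rw [Multiset.count_add, count_roots]
    by_cases ha : a = 0
    · subst ha
      have hTc : T.val.count 0 = 0 := by
        rw [Multiset.count_eq_zero]
        simpa using h0
      have : ({0, 0} : Multiset ℝ).count 0 = 2 := by simp [Multiset.count_cons, Multiset.count_singleton]
      rw [hTc, this]
      rw [le_rootMultiplicity_iff hS]
      simpa using hdvd
    · have h2 : ({0, 0} : Multiset ℝ).count a = 0 := by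
        rw [Multiset.count_eq_zero]
        simp [ha]
      rw [h2, add_zero]
      by_cases haT : a ∈ T
      · have : T.val.count a = 1 := Multiset.count_eq_one_of_mem T.nodup haT
        rw [this]
        exact (rootMultiplicity_pos hS).mpr (hT a haT)
      · have : T.val.count a = 0 := by rw [Multiset.count_eq_zero]; simpa using haT
        simp [this]
  calc T.card + 2 = Multiset.card (T.val + ({0, 0} : Multiset ℝ)) := by simp
    _ ≤ Multiset.card S.roots := Multiset.card_le_card hM
    _ ≤ S.natDegree := S.card_roots'


lemma abs_tendsto_atBot (P : Polynomial ℝ) (hdeg : 0 < P.degree) :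
    Tendsto (fun t => |P.eval t|) atBot atTop := by
  have h1 : 0 < (P.comp (-X)).degree := by
    rw [← natDegree_pos_iff_degree_pos] at hdeg ⊢
    rwa [natDegree_comp, natDegree_neg, natDegree_X, mul_one]
  have h2 := (P.comp (-X)).abs_tendsto_atTop h1
  have h3 : Tendsto (fun t : ℝ => -t) atBot atTop := tendsto_neg_atBot_atTop
  have h4 := h2.comp h3
  convert h4 using 1
  ext t
  simp [Function.comp, eval_comp]

lemma alternation (n : ℕ) (hn : 1 ≤ n) (P : Polynomial ℝ) (hdeg : P.natDegree = n)
    (hlead2 : P.leadingCoeff * P.leadingCoeff = 1)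
    (hcard : Multiset.card P.roots = n) (hnodup : P.roots.Nodup)
    (hcrit : ∀ y : ℝ, P.derivative.eval y = 0 → 1 ≤ |P.eval y|) :
    ∃ x : ℕ → ℝ, (∀ i, |P.eval (x i)| = 1) ∧ (∀ i j, i < j → j ≤ n → x i < x j) ∧
      (∀ i, i < n → P.eval (x i) * P.eval (x (i + 1)) < 0) := by
  classical
  have hP0 : P ≠ 0 := by
    intro h
    rw [h] at hlead2
    simp at hlead2
  have hn0 : 0 < n := hn
  have hdegpos : 0 < P.degree := natDegree_pos_iff_degree_pos.mp (hdeg ▸ hn0)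
  have hFcard : P.roots.toFinset.card = n := by
    rw [Multiset.toFinset_card_of_nodup hnodup, hcard]
  set e := P.roots.toFinset.orderIsoOfFin hFcard with he
  set r : Fin n → ℝ := fun i => (e i : ℝ) with hr
  have hrmono : StrictMono r := fun i j h => by
    exact_mod_cast e.strictMono h
  have hroot : ∀ i, P.eval (r i) = 0 := fun i =>
    (mem_roots hP0).mp (Multiset.mem_toFinset.mp (e i).2)
  -- product formula
  have hprod : ∀ t : ℝ, P.eval t = P.leadingCoeff * ∏ i : Fin n, (t - r i) := by
    intro t
    conv_lhs => rw [← C_leadingCoeff_mul_prod_multiset_X_sub_C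
      (show Multiset.card P.roots = P.natDegree by rw [hcard, hdeg])]
    rw [eval_mul, eval_C, eval_multiset_prod, Multiset.map_map]
    congr 1
    simp only [Function.comp_def, eval_sub, eval_X, eval_C]
    have hv : P.roots = P.roots.toFinset.val := by
      rw [Multiset.toFinset_val, Multiset.dedup_eq_self.mpr hnodup]
    rw [hv, ← Finset.prod_eq_multiset_prod]
    rw [← Finset.prod_coe_sort P.roots.toFinset (fun a => t - (a : ℝ))]
    exact (Equiv.prod_comp e.toEquiv (fun a : P.roots.toFinset => t - (a : ℝ))).symm
  set N : ℝ → ℕ := fun t => (Finset.univ.filter fun i => t < r i).card with hN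
  have hsign : ∀ t : ℝ, P.eval t ≠ 0 →
      ∃ p : ℝ, 0 < p ∧ P.eval t = P.leadingCoeff * (-1) ^ (N t) * p := by
    intro t ht
    have hne : ∀ i, t ≠ r i := by
      intro i h
      exact ht (h ▸ hroot i)
    refine ⟨(∏ i ∈ Finset.univ.filter fun i => t < r i, (r i - t)) *
      (∏ i ∈ Finset.univ.filter fun i => ¬ t < r i, (t - r i)), ?_, ?_⟩
    · apply mul_pos
      · exact Finset.prod_pos fun i hi => sub_pos.mpr (Finset.mem_filter.mp hi).2
      · refine Finset.prod_pos fun i hi => sub_pos.mpr ?_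
        have := (Finset.mem_filter.mp hi).2
        exact lt_of_le_of_ne (not_lt.mp this) (Ne.symm (hne i))
    · rw [hprod t, ← Finset.prod_filter_mul_prod_filter_not Finset.univ (fun i => t < r i)
        (fun i => t - r i)]
      have h1 : ∏ i ∈ Finset.univ.filter fun i => t < r i, (t - r i)
          = (-1) ^ (N t) * ∏ i ∈ Finset.univ.filter fun i => t < r i, (r i - t) := by
        rw [← Finset.prod_const (-1 : ℝ), ← Finset.prod_mul_distrib]
        congr 1
        ext i
        ring
      rw [h1]
      ring
  have hanti : ∀ s t : ℝ, s ≤ t → N t ≤ N s := by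
    intro s t hst
    apply Finset.card_le_card
    intro i hi
    rw [Finset.mem_filter] at hi ⊢
    exact ⟨hi.1, lt_of_le_of_lt hst hi.2⟩
  have hNlt : ∀ s t : ℝ, N t < N s → s < t := by
    intro s t h
    by_contra hc
    exact absurd (hanti t s (not_lt.mp hc)) (not_le.mpr h)
  have hNloc : ∀ (t : ℝ) (i : ℕ), (∀ j : Fin n, i ≤ (j : ℕ) → t < r j) →
      (∀ j : Fin n, (j : ℕ) < i → r j < t) → N t = n - i := by
    intro t i h₁ h₂
    by_cases hi : i < n
    · have hfe : (Finset.univ.filter fun j => t < r j) = Finset.Ici (⟨i, hi⟩ : Fin n) := by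
        ext j
        simp only [Finset.mem_filter, Finset.mem_univ, true_and, Finset.mem_Ici, Fin.le_def]
        constructor
        · intro hj
          by_contra hc
          push_neg at hc
          exact absurd hj (not_lt.mpr (h₂ j hc).le)
        · exact h₁ j
      rw [hN]
      simp only
      rw [hfe, Fin.card_Ici]
    · have hfe : (Finset.univ.filter fun j => t < r j) = ∅ := by
        apply Finset.filter_eq_empty_iff.mpr
        intro j _
        exact not_lt.mpr (h₂ j (lt_of_lt_of_le j.2 (not_lt.mp hi))).le
      rw [hN]
      simp only
      rw [hfe, Finset.card_empty, eq_comm, Nat.sub_eq_zero_iff_le]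
      exact not_lt.mp hi
  have hcont : Continuous fun t : ℝ => |P.eval t| := P.continuous.abs
  -- existence of alternation points
  have hpoint : ∀ i : ℕ, i ≤ n → ∃ t, |P.eval t| = 1 ∧ N t = n - i := by
    intro i hi
    rcases Nat.eq_zero_or_pos i with rfl | hipos
    · -- leftmost point
      obtain ⟨w, hw1, hw2⟩ : ∃ w, 1 ≤ |P.eval w| ∧ w < r ⟨0, hn0⟩ := by
        have h1 := (_root_.abs_tendsto_atBot P hdegpos).eventually (eventually_ge_atTop 1)
        have h2 := eventually_lt_atBot (r ⟨0, hn0⟩)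
        exact (h1.and h2).exists
      have hPr : |P.eval (r ⟨0, hn0⟩)| = 0 := by rw [hroot]; simp
      obtain ⟨t, ht, ht1'⟩ := intermediate_value_Icc' hw2.le hcont.continuousOn
        (Set.mem_Icc.mpr ⟨by rw [hPr]; norm_num, hw1⟩)
      have ht1 : |P.eval t| = 1 := ht1'
      refine ⟨t, ht1, hNloc t 0 (fun j _ => ?_) (fun j hj => absurd hj (Nat.not_lt_zero _))⟩
      have htr0 : t < r ⟨0, hn0⟩ := lt_of_le_of_ne ht.2 (by
        intro h
        rw [h, hPr] at ht1
        norm_num at ht1)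
      exact lt_of_lt_of_le htr0 (hrmono.monotone (by simp [Fin.le_def]))
    · rcases lt_or_eq_of_le hi with hilt | hieq
      · -- middle points: i ∈ [1, n-1]
        have hi1 : i - 1 < n := by omega
        set a := r ⟨i - 1, hi1⟩ with ha
        set b := r ⟨i, hilt⟩ with hb
        have hab : a < b := hrmono (by simp only [Fin.lt_def]; omega)
        obtain ⟨y, hy, hy0⟩ := exists_deriv_eq_zero (f := fun t => P.eval t) hab
          P.continuous.continuousOn (by show P.eval a = P.eval b; rw [ha, hb, hroot, hroot])
        rw [Polynomial.deriv] at hy0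
        have hy1 : 1 ≤ |P.eval y| := hcrit y hy0
        have hPa : |P.eval a| = 0 := by rw [ha, hroot]; simp
        obtain ⟨t, ht, ht1'⟩ := intermediate_value_Icc hy.1.le hcont.continuousOn
          (Set.mem_Icc.mpr ⟨by rw [hPa]; norm_num, hy1⟩)
        have ht1 : |P.eval t| = 1 := ht1'
        have hta : a < t := lt_of_le_of_ne ht.1 (by
          intro h
          rw [← h, hPa] at ht1
          norm_num at ht1)
        have htb : t < b := lt_of_le_of_lt ht.2 hy.2
        refine ⟨t, ht1, hNloc t i (fun j hj => ?_) (fun j hj => ?_)⟩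
        · exact lt_of_lt_of_le htb (hrmono.monotone (by simp only [Fin.le_def]; omega))
        · calc r j ≤ a := hrmono.monotone (by simp [Fin.le_def]; omega)
            _ < t := hta
      · -- rightmost point
        rw [hieq]
        have hn1 : n - 1 < n := by omega
        obtain ⟨w, hw1, hw2⟩ : ∃ w, 1 ≤ |P.eval w| ∧ r ⟨n - 1, hn1⟩ < w := by
          have h1 := (P.abs_tendsto_atTop hdegpos).eventually (eventually_ge_atTop 1)
          have h2 := eventually_gt_atTop (r ⟨n - 1, hn1⟩)
          exact (h1.and h2).exists
        have hPr : |P.eval (r ⟨n - 1, hn1⟩)| = 0 := by rw [hroot]; simp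
        obtain ⟨t, ht, ht1'⟩ := intermediate_value_Icc hw2.le hcont.continuousOn
          (Set.mem_Icc.mpr ⟨by rw [hPr]; norm_num, hw1⟩)
        have ht1 : |P.eval t| = 1 := ht1'
        refine ⟨t, ht1, ?_⟩
        have hrt : ∀ j : Fin n, r j < t := by
          intro j
          have h3 : r j ≤ r ⟨n - 1, hn1⟩ := hrmono.monotone (by simp only [Fin.le_def]; omega)
          have h4 : r ⟨n - 1, hn1⟩ < t := lt_of_le_of_ne ht.1 (by
            intro h
            rw [← h, hPr] at ht1
            norm_num at ht1)
          exact lt_of_le_of_lt h3 h4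
        rw [hNloc t n (fun j hj => absurd j.2 (not_lt.mpr hj)) (fun j _ => hrt j)]
  have hex : ∀ i : ℕ, ∃ t, |P.eval t| = 1 ∧ N t = n - min i n :=
    fun i => hpoint (min i n) (min_le_right _ _)
  choose x hx1 hx2 using hex
  have hxne : ∀ i, P.eval (x i) ≠ 0 := by
    intro i h
    have := hx1 i
    rw [h] at this
    norm_num at this
  refine ⟨x, hx1, ?_, ?_⟩
  · intro i j hij hjn
    apply hNlt
    rw [hx2, hx2]
    have : min i n = i := min_eq_left (le_trans hij.le hjn)
    rw [this, min_eq_left hjn]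
    omega
  · intro i hi
    obtain ⟨p, hp, hep⟩ := hsign (x i) (hxne i)
    obtain ⟨q, hq, heq⟩ := hsign (x (i + 1)) (hxne (i + 1))
    have hNi : N (x i) = n - i := by rw [hx2, min_eq_left hi.le]
    have hNi1 : N (x (i + 1)) = n - (i + 1) := by rw [hx2, min_eq_left hi]
    have hodd : (-1 : ℝ) ^ (N (x i) + N (x (i + 1))) = -1 := by
      apply Odd.neg_one_pow
      rw [hNi, hNi1]
      exact ⟨n - (i + 1), by omega⟩
    rw [hep, heq]
    have hcalc : P.leadingCoeff * (-1) ^ N (x i) * p *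
        (P.leadingCoeff * (-1) ^ N (x (i + 1)) * q)
        = (P.leadingCoeff * P.leadingCoeff) * ((-1) ^ (N (x i) + N (x (i + 1)))) * (p * q) := by
      rw [pow_add]
      ring
    rw [hcalc, hlead2, hodd]
    nlinarith

set_option maxHeartbeats 1000000 in
lemma lower_bound_aux (n : ℕ) (hn : 1 ≤ n) (P : Polynomial ℝ) (hdeg : P.natDegree = n)
    (hlead2 : P.leadingCoeff * P.leadingCoeff = 1)
    (hcard : Multiset.card P.roots = n) (hnodup : P.roots.Nodup)
    (hcrit : ∀ y : ℝ, P.derivative.eval y = 0 → 1 ≤ |P.eval y|)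
    (A : Set ℝ) (hA : A = {x : ℝ | P.eval x ∈ Set.Icc (-1 : ℝ) 1})
    (h0 : (0 : ℝ) ∉ A) (hAclosed : IsClosed A)
    (Q : Polynomial ℝ) (hQdeg : Q.natDegree ≤ n) (hQ0 : Q.eval 0 = 1)
    (hQ : ∀ t ∈ A, |P.eval 0 * Q.eval t| < 1) : False := by
  classical
  obtain ⟨x, hx1, hxlt, halt⟩ := alternation n hn P hdeg hlead2 hcard hnodup hcrit
  set c := P.eval 0 with hc
  set S := C c * Q - P with hS
  have hxA : ∀ i, x i ∈ A := by
    intro i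
    rw [hA]
    exact Set.mem_setOf_eq ▸ Set.mem_Icc.mpr (abs_le.mp (hx1 i).le)
  have hxne0 : ∀ i, x i ≠ 0 := fun i h => h0 (h ▸ hxA i)
  have hSeval : ∀ t, S.eval t = c * Q.eval t - P.eval t := by intro t; simp [hS]
  have hS0 : S.eval 0 = 0 := by rw [hSeval, hQ0, ← hc]; ring
  have hPS : ∀ i, P.eval (x i) * S.eval (x i) < 0 := by
    intro i
    have h1 : |P.eval (x i) * (c * Q.eval (x i))| < 1 := by
      rw [abs_mul, hx1 i, one_mul]
      exact hQ _ (hxA i)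
    have h2 := (abs_lt.mp h1).2
    have h3 : P.eval (x i) * P.eval (x i) = 1 := by
      nlinarith [hx1 i, sq_abs (P.eval (x i))]
    rw [hSeval]
    nlinarith
  have hSne : S ≠ 0 := by
    intro h
    have h1 := hPS 0
    rw [h] at h1
    simp at h1
  have hSdeg : S.natDegree ≤ n := by
    refine le_trans (natDegree_sub_le _ _) (max_le (le_trans (natDegree_C_mul_le c Q) hQdeg)
      (le_of_eq hdeg))
  have hSS : ∀ j, j < n → S.eval (x j) * S.eval (x (j + 1)) < 0 := by
    intro j hj
    have h1 := hPS j
    have h2 := hPS (j + 1)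
    have h3 := halt j hj
    by_contra hcon
    push_neg at hcon
    have h4 : (P.eval (x j) * P.eval (x (j + 1))) * (S.eval (x j) * S.eval (x (j + 1))) ≤ 0 :=
      mul_nonpos_of_nonpos_of_nonneg h3.le hcon
    have h6 := mul_pos_of_neg_of_neg h1 h2
    have h5 : P.eval (x j) * S.eval (x j) * (P.eval (x (j + 1)) * S.eval (x (j + 1)))
        = (P.eval (x j) * P.eval (x (j + 1))) * (S.eval (x j) * S.eval (x (j + 1))) := by ring
    rw [h5] at h6
    linarith
  have hz : ∀ j, ∃ t, j < n → t ∈ Set.Ioo (x j) (x (j + 1)) ∧ S.eval t = 0 := by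
    intro j
    by_cases hj : j < n
    · obtain ⟨t, ht, ht0⟩ := exists_root_between S (hxlt j (j + 1) (by omega) (by omega))
        (hSS j hj)
      exact ⟨t, fun _ => ⟨ht, ht0⟩⟩
    · exact ⟨0, fun h => absurd h hj⟩
  choose z hzz using hz
  have xle : ∀ i j, i ≤ j → j ≤ n → x i ≤ x j := by
    intro i j hij hjn
    rcases eq_or_lt_of_le hij with rfl | h
    · exact le_refl _
    · exact (hxlt i j h hjn).le
  have hzlt : ∀ j k, j < k → k < n → z j < z k := by
    intro j k hjk hk
    have h1 := (hzz j (by omega)).1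
    have h2 := (hzz k hk).1
    calc z j < x (j + 1) := h1.2
      _ ≤ x k := xle _ _ (by omega) (by omega)
      _ < z k := h2.1
  have hzinj : ∀ s : Finset ℕ, (∀ j ∈ s, j < n) → Set.InjOn z s := by
    intro s hs j hj k hk hjk
    by_contra hne2
    rcases lt_or_gt_of_ne hne2 with h | h
    · exact absurd hjk (ne_of_lt (hzlt j k h (hs k hk)))
    · exact absurd hjk.symm (ne_of_lt (hzlt k j h (hs j hj)))
  have hfinish : (∀ j, j < n → z j ≠ 0) → False := by
    intro hne
    set T := insert (0 : ℝ) ((Finset.range n).image z) with hT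
    have hTroots : ∀ a ∈ T, S.eval a = 0 := by
      intro a ha
      rcases Finset.mem_insert.mp ha with rfl | ha
      · exact hS0
      · obtain ⟨j, hj, rfl⟩ := Finset.mem_image.mp ha
        exact (hzz j (Finset.mem_range.mp hj)).2
    have hcardT : T.card = n + 1 := by
      rw [hT, Finset.card_insert_of_notMem, Finset.card_image_of_injOn
        (hzinj _ (fun j hj => Finset.mem_range.mp hj)), Finset.card_range]
      intro hmem
      obtain ⟨j, hj, hj0⟩ := Finset.mem_image.mp hmem
      exact hne j (Finset.mem_range.mp hj) hj0
    have := card_distinct_roots_le S hSne T hTroots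
    omega
  rcases lt_trichotomy (x 0) 0 with hx0 | hx0 | hx0
  · rcases lt_trichotomy (x n) 0 with hxn | hxn | hxn
    · -- Case B : all points negative
      apply hfinish
      intro j hj
      have h1 : z j < x (j + 1) := (hzz j hj).1.2
      have h2 : x (j + 1) ≤ x n := xle _ _ (by omega) (le_refl _)
      exact ne_of_lt (by linarith)
    · exact hxne0 n hxn
    · -- Case C : 0 in the middle
      have hfind : ∃ i, 0 < x i := ⟨n, hxn⟩
      set i₀ := Nat.find hfind with hi₀
      have hi₀pos : 0 < x i₀ := Nat.find_spec hfind
      have hi₀n : i₀ ≤ n := Nat.find_le hxn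
      have hi₀0 : i₀ ≠ 0 := by
        intro h
        rw [h] at hi₀pos
        linarith
      have hprev : x (i₀ - 1) < 0 := by
        have h3 := Nat.find_min hfind (m := i₀ - 1) (by omega)
        push_neg at h3
        exact lt_of_le_of_ne h3 (hxne0 _)
      set Aneg := {a : ℝ | a ∈ A ∧ a < 0} with hAneg
      set Apos := {a : ℝ | a ∈ A ∧ 0 < a} with hApos
      have hAnegne : Aneg.Nonempty := ⟨x (i₀ - 1), hxA _, hprev⟩
      have hAposne : Apos.Nonempty := ⟨x i₀, hxA _, hi₀pos⟩
      have hAnegbdd : BddAbove Aneg := ⟨0, fun a ha => ha.2.le⟩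
      have hAposbdd : BddBelow Apos := ⟨0, fun a ha => ha.2.le⟩
      set u := sSup Aneg with hu
      set v := sInf Apos with hv
      have huA : u ∈ A :=
        (closure_minimal (fun a (ha : a ∈ Aneg) => ha.1) hAclosed)
          (csSup_mem_closure hAnegne hAnegbdd)
      have hvA : v ∈ A :=
        (closure_minimal (fun a (ha : a ∈ Apos) => ha.1) hAclosed)
          (csInf_mem_closure hAposne hAposbdd)
      have hu0 : u < 0 :=
        lt_of_le_of_ne (csSup_le hAnegne fun a ha => ha.2.le) (fun h => h0 (h ▸ huA))
      have hv0 : 0 < v :=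
        lt_of_le_of_ne (le_csInf hAposne fun a ha => ha.2.le) (fun h => h0 (h.symm ▸ hvA))
      have huv : u < v := hu0.trans hv0
      have hgap : ∀ t ∈ Set.Ioo u v, t ∉ A := by
        intro t ht htA
        rcases lt_trichotomy t 0 with h3 | h3 | h3
        · exact absurd (le_csSup hAnegbdd ⟨htA, h3⟩) (not_le.mpr ht.1)
        · exact h0 (h3 ▸ htA)
        · exact absurd (csInf_le hAposbdd ⟨htA, h3⟩) (not_le.mpr ht.2)
      have hgap1 : ∀ t ∈ Set.Ioo u v, 1 < |P.eval t| := by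
        intro t ht
        have h3 := hgap t ht
        rw [hA, Set.mem_setOf_eq, Set.mem_Icc] at h3
        push_neg at h3
        rcases le_or_gt (-1 : ℝ) (P.eval t) with h4 | h4
        · exact lt_abs.mpr (Or.inl (h3 h4))
        · exact lt_abs.mpr (Or.inr (by linarith))
      have hmemabs : ∀ t ∈ A, |P.eval t| ≤ 1 := by
        intro t ht
        rw [hA, Set.mem_setOf_eq, Set.mem_Icc] at ht
        exact abs_le.mpr ht
      have hu1 : |P.eval u| = 1 := by
        refine le_antisymm (hmemabs u huA) ?_
        have hev : ∀ᶠ t in nhdsWithin u (Set.Ioi u), 1 ≤ |P.eval t| := by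
          filter_upwards [Ioo_mem_nhdsGT_of_mem (Set.mem_Ico.mpr ⟨le_refl u, huv⟩)] with t ht
          exact (hgap1 t ht).le
        exact ge_of_tendsto ((P.continuous.abs.tendsto u).mono_left nhdsWithin_le_nhds) hev
      have hv1 : |P.eval v| = 1 := by
        refine le_antisymm (hmemabs v hvA) ?_
        have hev : ∀ᶠ t in nhdsWithin v (Set.Iio v), 1 ≤ |P.eval t| := by
          filter_upwards [Ioo_mem_nhdsLT_of_mem (Set.mem_Ioc.mpr ⟨huv, le_refl v⟩)] with t ht
          exact (hgap1 t ht).le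
        exact ge_of_tendsto ((P.continuous.abs.tendsto v).mono_left nhdsWithin_le_nhds) hev
      have hnoroot : ∀ t ∈ Set.Icc u v, P.eval t ≠ 0 := by
        intro t ht h3
        rcases eq_or_lt_of_le ht.1 with h4 | h4
        · rw [← h4] at h3
          rw [h3] at hu1
          norm_num at hu1
        rcases eq_or_lt_of_le ht.2 with h5 | h5
        · rw [h5] at h3
          rw [h3] at hv1
          norm_num at hv1
        · have h6 := hgap1 t ⟨h4, h5⟩
          rw [h3] at h6
          norm_num at h6
      have hPuv : 0 < P.eval u * P.eval v := by
        rcases lt_trichotomy (P.eval u * P.eval v) 0 with h3 | h3 | h3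
        · obtain ⟨t, ht, ht0⟩ := exists_root_between P huv h3
          exact absurd ht0 (hnoroot t (Set.Ioo_subset_Icc_self ht))
        · exfalso
          rcases mul_eq_zero.mp h3 with h4 | h4
          · rw [h4] at hu1; norm_num at hu1
          · rw [h4] at hv1; norm_num at hv1
        · exact h3
      set σ := P.eval u with hσ
      have hσ1 : σ * σ = 1 := by nlinarith [sq_abs σ, hu1]
      have hPv : P.eval v = σ := by
        have h4 := (abs_eq (by norm_num : (0:ℝ) ≤ 1)).mp hu1
        have h5 := (abs_eq (by norm_num : (0:ℝ) ≤ 1)).mp hv1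
        rcases h4 with h4 | h4 <;> rcases h5 with h5 | h5
        · rw [h4, h5]
        · rw [h4, h5] at hPuv; norm_num at hPuv
        · rw [h4, h5] at hPuv; norm_num at hPuv
        · rw [h4, h5]
      have hσSu : σ * S.eval u < 0 := by
        have h5 : |σ * (c * Q.eval u)| < 1 := by
          rw [abs_mul, hu1, one_mul]
          exact hQ u huA
        have h6 : σ * S.eval u = σ * (c * Q.eval u) - 1 := by
          rw [hSeval, mul_sub, ← hσ, hσ1]
        rw [h6]
        linarith [(abs_lt.mp h5).2]
      have hσSv : σ * S.eval v < 0 := by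
        have h5 : |σ * (c * Q.eval v)| < 1 := by
          rw [abs_mul, hu1, one_mul]
          exact hQ v hvA
        have h6 : σ * S.eval v = σ * (c * Q.eval v) - 1 := by
          rw [hSeval, mul_sub, hPv, hσ1]
        rw [h6]
        linarith [(abs_lt.mp h5).2]
      -- ordering facts
      have hxu : x (i₀ - 1) ≤ u := le_csSup hAnegbdd ⟨hxA _, hprev⟩
      have hvx : v ≤ x i₀ := csInf_le hAposbdd ⟨hxA _, hi₀pos⟩
      have hzout : ∀ j ∈ (Finset.range n).erase (i₀ - 1), z j < u ∨ v < z j := by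
        intro j hj
        obtain ⟨hjne, hjr⟩ := Finset.mem_erase.mp hj
        have hjn := Finset.mem_range.mp hjr
        rcases lt_or_gt_of_ne hjne with h3 | h3
        · left
          calc z j < x (j + 1) := (hzz j hjn).1.2
            _ ≤ x (i₀ - 1) := xle _ _ (by omega) (by omega)
            _ ≤ u := hxu
        · right
          have h4 : i₀ ≤ j := by omega
          calc v ≤ x i₀ := hvx
            _ ≤ x j := xle _ _ h4 (by omega)
            _ < z j := (hzz j hjn).1.1
      have himcard : (((Finset.range n).erase (i₀ - 1)).image z).card = n - 1 := by
        rw [Finset.card_image_of_injOn (hzinj _ (fun j hj =>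
          Finset.mem_range.mp (Finset.mem_of_mem_erase hj))),
          Finset.card_erase_of_mem (Finset.mem_range.mpr (by omega)), Finset.card_range]
      have himroots : ∀ a ∈ ((Finset.range n).erase (i₀ - 1)).image z, S.eval a = 0 := by
        intro a ha
        obtain ⟨j, hj, rfl⟩ := Finset.mem_image.mp ha
        exact (hzz j (Finset.mem_range.mp (Finset.mem_of_mem_erase hj))).2
      by_cases hwex : ∃ w ∈ Set.Ioo u v, 0 < σ * S.eval w
      · obtain ⟨w, hwmem, hw0⟩ := hwex
        obtain ⟨z₁, hz₁mem, hz₁0⟩ : ∃ z₁ ∈ Set.Ioo u w, S.eval z₁ = 0 := by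
          apply exists_root_between S hwmem.1
          nlinarith
        obtain ⟨z₂, hz₂mem, hz₂0⟩ : ∃ z₂ ∈ Set.Ioo w v, S.eval z₂ = 0 := by
          apply exists_root_between S hwmem.2
          nlinarith
        set T := insert z₁ (insert z₂ (((Finset.range n).erase (i₀ - 1)).image z)) with hT
        have hz₁uv : u < z₁ ∧ z₁ < v := ⟨hz₁mem.1, hz₁mem.2.trans hwmem.2⟩
        have hz₂uv : u < z₂ ∧ z₂ < v := ⟨hwmem.1.trans hz₂mem.1, hz₂mem.2⟩
        have hz₁nim : z₁ ∉ ((Finset.range n).erase (i₀ - 1)).image z := by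
          intro hmem
          obtain ⟨j, hj, hje⟩ := Finset.mem_image.mp hmem
          rcases hzout j hj with h3 | h3 <;> rw [hje] at h3 <;>
            [exact absurd h3 (not_lt.mpr hz₁uv.1.le); exact absurd h3 (not_lt.mpr hz₁uv.2.le)]
        have hz₂nim : z₂ ∉ ((Finset.range n).erase (i₀ - 1)).image z := by
          intro hmem
          obtain ⟨j, hj, hje⟩ := Finset.mem_image.mp hmem
          rcases hzout j hj with h3 | h3 <;> rw [hje] at h3 <;>
            [exact absurd h3 (not_lt.mpr hz₂uv.1.le); exact absurd h3 (not_lt.mpr hz₂uv.2.le)]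
        have hz₁₂ : z₁ ≠ z₂ := ne_of_lt (hz₁mem.2.trans hz₂mem.1)
        have hTroots : ∀ a ∈ T, S.eval a = 0 := by
          intro a ha
          rcases Finset.mem_insert.mp ha with rfl | ha
          · exact hz₁0
          rcases Finset.mem_insert.mp ha with rfl | ha
          · exact hz₂0
          · exact himroots a ha
        have hcardT : T.card = n + 1 := by
          rw [hT, Finset.card_insert_of_notMem (by
            intro hmem
            rcases Finset.mem_insert.mp hmem with h3 | h3
            · exact hz₁₂ h3
            · exact hz₁nim h3),
            Finset.card_insert_of_notMem hz₂nim, himcard]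
          omega
        have := card_distinct_roots_le S hSne T hTroots
        omega
      · push_neg at hwex
        have hmax : IsLocalMax (fun t => σ * S.eval t) 0 := by
          filter_upwards [isOpen_Ioo.mem_nhds (Set.mem_Ioo.mpr ⟨hu0, hv0⟩)] with t ht
          simp only [hS0, mul_zero]
          exact hwex t ht
        have hder := hmax.deriv_eq_zero
        have hder2 : deriv (fun t => σ * S.eval t) 0 = σ * S.derivative.eval 0 := by
          rw [deriv_const_mul _ (S.differentiableAt), Polynomial.deriv]
        have hder0 : S.derivative.eval 0 = 0 := by
          rw [hder2] at hder
          rcases mul_eq_zero.mp hder with h3 | h3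
          · exfalso; nlinarith
          · exact h3
        have hdvd := X_sq_dvd S hS0 hder0
        have h0T : (0 : ℝ) ∉ ((Finset.range n).erase (i₀ - 1)).image z := by
          intro hmem
          obtain ⟨j, hj, hje⟩ := Finset.mem_image.mp hmem
          rcases hzout j hj with h3 | h3 <;> rw [hje] at h3 <;> linarith
        have := card_distinct_roots_add_two_le S hSne _ himroots h0T hdvd
        omega
  · exact hxne0 0 hx0
  · -- Case A : all points positive
    apply hfinish
    intro j hj
    have h1 : x j < z j := (hzz j hj).1.1
    have h2 : x 0 ≤ x j := xle _ _ (by omega) (by omega)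
    exact ne_of_gt (by linarith)


noncomputable def supNorm (S : Set ℝ) (P : ℝ[X]) : ℝ := sSup ((fun x => |P.eval x|) '' S)

noncomputable def minDev (S : Set ℝ) (n : ℕ) : ℝ :=
  sInf {r : ℝ | ∃ Q : ℝ[X], Q.degree ≤ n ∧ Q.eval 0 = 1 ∧ r = supNorm S Q}

set_option maxHeartbeats 1000000 in
theorem equality_case_algebraic (n : ℕ) (hn : 1 ≤ n) (P : ℝ[X])
    (hdeg : P.natDegree = n)
    (hlead : P.leadingCoeff = 1 ∨ P.leadingCoeff = -1)
    (hroots : P.roots.card = n ∧ P.roots.Nodup)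
    (hcrit : ∀ y : ℝ, P.derivative.eval y = 0 → 1 ≤ |P.eval y|)
    (A : Set ℝ) (hA : A = {x : ℝ | P.eval x ∈ Set.Icc (-1 : ℝ) 1})
    (h0 : (0 : ℝ) ∉ A) (hP0 : 1 < |P.eval 0|) :
    minDev A n = 1 / |P.eval 0| ∧
    minDev A n =
      2 * ((|P.eval 0| + Real.sqrt ((P.eval 0) ^ 2 - 1)) ^ (-(1 / n : ℝ))) ^ n
        / (1 + ((|P.eval 0| + Real.sqrt ((P.eval 0) ^ 2 - 1)) ^ (-(1 / n : ℝ))) ^ (2 * n)) := by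
  classical
  obtain ⟨hcard, hnodup⟩ := hroots
  set c := P.eval 0 with hc
  have hc0 : c ≠ 0 := by
    intro h
    rw [h] at hP0
    norm_num at hP0
  have hcabs : 0 < |c| := lt_trans one_pos hP0
  have hlead2 : P.leadingCoeff * P.leadingCoeff = 1 := by
    rcases hlead with h | h <;> rw [h] <;> norm_num
  have hPne : P ≠ 0 := by
    intro h
    rw [h] at hlead2
    simp at hlead2
  have hdegpos : 0 < P.degree := natDegree_pos_iff_degree_pos.mp (by omega)
  have hAc : IsClosed A := by
    rw [hA]
    exact isClosed_Icc.preimage P.continuous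
  obtain ⟨b₀, hb₀⟩ : ∃ b₀, ∀ t ≥ b₀, 1 < |P.eval t| :=
    eventually_atTop.mp ((P.abs_tendsto_atTop hdegpos).eventually (eventually_gt_atTop 1))
  obtain ⟨a₀, ha₀⟩ : ∃ a₀, ∀ t ≤ a₀, 1 < |P.eval t| :=
    eventually_atBot.mp ((_root_.abs_tendsto_atBot P hdegpos).eventually (eventually_gt_atTop 1))
  have hmemabs : ∀ t ∈ A, |P.eval t| ≤ 1 := by
    intro t ht
    rw [hA, Set.mem_setOf_eq, Set.mem_Icc] at ht
    exact abs_le.mpr ht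
  have hAsub : A ⊆ Set.Icc a₀ b₀ := by
    intro t ht
    have h1 := hmemabs t ht
    constructor
    · by_contra h
      push_neg at h
      exact absurd h1 (not_le.mpr (ha₀ t h.le))
    · by_contra h
      push_neg at h
      exact absurd h1 (not_le.mpr (hb₀ t h.le))
  have hAcomp : IsCompact A := isCompact_Icc.of_isClosed_subset hAc hAsub
  have hbdd : ∀ R : ℝ[X], BddAbove ((fun t => |R.eval t|) '' A) := fun R =>
    (hAcomp.image R.continuous.abs).bddAbove
  obtain ⟨x, hx1, -, -⟩ := alternation n hn P hdeg hlead2 hcard hnodup hcrit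
  have hx0A : x 0 ∈ A := by
    rw [hA]
    exact Set.mem_Icc.mpr (abs_le.mp (hx1 0).le)
  set Q₀ : ℝ[X] := C c⁻¹ * P with hQ₀
  have hQ₀deg : Q₀.degree ≤ (n : ℕ) := by
    calc Q₀.degree ≤ (C c⁻¹).degree + P.degree := degree_mul_le _ _
      _ ≤ 0 + (n : ℕ) := add_le_add degree_C_le (by rw [degree_eq_natDegree hPne, hdeg])
      _ = (n : ℕ) := zero_add _
  have hQ₀0 : Q₀.eval 0 = 1 := by
    rw [hQ₀, eval_mul, eval_C, ← hc]
    exact inv_mul_cancel₀ hc0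
  have hsupQ₀ : supNorm A Q₀ = 1 / |c| := by
    unfold _root_.supNorm
    apply le_antisymm
    · apply csSup_le ⟨_, Set.mem_image_of_mem _ hx0A⟩
      rintro y ⟨t, htA, rfl⟩
      show |Q₀.eval t| ≤ 1 / |c|
      have h2 : |Q₀.eval t| = |c|⁻¹ * |P.eval t| := by
        rw [hQ₀, eval_mul, eval_C, abs_mul, abs_inv]
      rw [h2, one_div]
      calc |c|⁻¹ * |P.eval t| ≤ |c|⁻¹ * 1 :=
            mul_le_mul_of_nonneg_left (hmemabs t htA) (inv_nonneg.mpr hcabs.le)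
        _ = |c|⁻¹ := mul_one _
    · apply le_csSup (hbdd Q₀)
      refine ⟨x 0, hx0A, ?_⟩
      show |Q₀.eval (x 0)| = 1 / |c|
      rw [hQ₀, eval_mul, eval_C, abs_mul, abs_inv, hx1 0, mul_one, one_div]
  have hmem₀ : (1 / |c| : ℝ) ∈
      {r : ℝ | ∃ Q : ℝ[X], Q.degree ≤ (n : ℕ) ∧ Q.eval 0 = 1 ∧ r = supNorm A Q} :=
    ⟨Q₀, hQ₀deg, hQ₀0, hsupQ₀.symm⟩
  have hbddbelow : BddBelow
      {r : ℝ | ∃ Q : ℝ[X], Q.degree ≤ (n : ℕ) ∧ Q.eval 0 = 1 ∧ r = supNorm A Q} := by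
    refine ⟨0, ?_⟩
    rintro r ⟨Q, hQd, hQ0', rfl⟩
    calc (0 : ℝ) ≤ |Q.eval (x 0)| := abs_nonneg _
      _ ≤ supNorm A Q := le_csSup (hbdd Q) ⟨x 0, hx0A, rfl⟩
  have hlower : ∀ r ∈ {r : ℝ | ∃ Q : ℝ[X], Q.degree ≤ (n : ℕ) ∧ Q.eval 0 = 1 ∧
      r = supNorm A Q}, 1 / |c| ≤ r := by
    rintro r ⟨Q, hQd, hQ0', rfl⟩
    by_contra hcon
    push_neg at hcon
    apply lower_bound_aux n hn P hdeg hlead2 hcard hnodup hcrit A hA h0 hAc Q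
      (natDegree_le_iff_degree_le.mpr hQd) hQ0'
    intro t htA
    have h1 : |Q.eval t| ≤ supNorm A Q := le_csSup (hbdd Q) ⟨t, htA, rfl⟩
    have h2 : |Q.eval t| < 1 / |c| := lt_of_le_of_lt h1 hcon
    rw [← hc, abs_mul]
    calc |c| * |Q.eval t| < |c| * (1 / |c|) := mul_lt_mul_of_pos_left h2 hcabs
      _ = 1 := by field_simp
  have hmin : minDev A n = 1 / |c| := by
    unfold minDev
    exact le_antisymm (csInf_le hbddbelow hmem₀) (le_csInf ⟨_, hmem₀⟩ hlower)
  refine ⟨hmin, ?_⟩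
  rw [hmin]
  have hsq : Real.sqrt (c ^ 2 - 1) ^ 2 = c ^ 2 - 1 := by
    apply Real.sq_sqrt
    nlinarith [sq_abs c]
  have hsnn : 0 ≤ Real.sqrt (c ^ 2 - 1) := Real.sqrt_nonneg _
  set s := Real.sqrt (c ^ 2 - 1) with hsdef
  have hbpos : 0 < |c| + s := by linarith
  have hn0 : (n : ℝ) ≠ 0 := by
    have : 0 < n := hn
    positivity
  have h1 : ((|c| + s) ^ (-(1 / n : ℝ))) ^ n = (|c| + s)⁻¹ := by
    rw [← Real.rpow_natCast ((|c| + s) ^ (-(1 / n : ℝ))) n, ← Real.rpow_mul hbpos.le]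
    rw [show (-(1 / n : ℝ)) * n = -1 by field_simp, Real.rpow_neg_one]
  have h2 : ((|c| + s) ^ (-(1 / n : ℝ))) ^ (2 * n) = ((|c| + s) ^ 2)⁻¹ := by
    rw [show 2 * n = n * 2 by ring, pow_mul, h1, ← inv_pow]
  rw [h1, h2]
  have hne1 : (1 : ℝ) + ((|c| + s) ^ 2)⁻¹ ≠ 0 := by positivity
  field_simp
  nlinarith [sq_abs c, hsq, hbpos, hcabs]
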